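/- Let σ be a finite Borel measure on the unit circle with σ({λ}) = 0, F finite-dimensional in L²(σ) with z·F ⊆ F ⊕ span{1}, T = 𝒫 M_z on F as above. Then the generalized eigenspace (root subspace) G_λ = ker(T - λ)^p, where p is minimal with ker(T-λ)^p = ker(T-λ)^{p+1}, equals span{(z-λ)^{-j} : 1 ≤ j ≤ p}. -/

import Mathlib

open MeasureTheory

/-- The one-dimensional subspace of `L²(σ)` spanned by the constant function `1`. -/
noncomputable def oneSpan (σ : MeasureTheory.Measure ℂ) : Submodule ℂ (Lp ℂ 2 σ) :=
  Submodule.span ℂ {g : Lp ℂ 2 σ | (g : ℂ → ℂ) =ᵐ[σ] fun _ => (1 : ℂ)}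

/-- `Q(l, p) = span{(z - l)^{-j} : 1 ≤ j ≤ p}` inside `L²(σ)`. -/
noncomputable def Qspace (σ : MeasureTheory.Measure ℂ) (l : ℂ) (p : ℕ) : Submodule ℂ (Lp ℂ 2 σ) :=
  Submodule.span ℂ {g : Lp ℂ 2 σ | ∃ j : ℕ, 1 ≤ j ∧ j ≤ p ∧
    (g : ℂ → ℂ) =ᵐ[σ] fun ξ => ((ξ - l)⁻¹) ^ j}

private lemma lp_coeFn_sum_smul (σ : Measure ℂ) (s : Finset ℕ) (c : ℕ → ℂ)
    (g : ℕ → Lp ℂ 2 σ) :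
    ⇑(∑ j ∈ s, c j • g j) =ᵐ[σ] fun ξ => ∑ j ∈ s, c j * (g j : ℂ → ℂ) ξ := by
  classical
  induction s using Finset.induction with
  | empty => simp; exact Lp.coeFn_zero (E := ℂ) (p := 2) (μ := σ)
  | insert _ _ hnot ih =>
      rename_i a s
      rw [Finset.sum_insert hnot]
      filter_upwards [Lp.coeFn_add (c a • g a) (∑ j ∈ s, c j • g j),
        Lp.coeFn_smul (c a) (g a), ih] with ξ h1 h2 h3
      rw [h1]; simp only [Pi.add_apply]; rw [h2, h3]
      simp [smul_eq_mul, Finset.sum_insert hnot]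

theorem stmt5 (σ : MeasureTheory.Measure ℂ) [IsFiniteMeasure σ]
    (hsupp : σ {z : ℂ | ‖z‖ ≠ 1} = 0)
    (l : ℂ) (hl : σ {l} = 0)
    (F : Submodule ℂ (Lp ℂ 2 σ)) (hfd : FiniteDimensional ℂ F)
    (hdisj : F ⊓ oneSpan σ = ⊥)
    (hinv : ∀ f : Lp ℂ 2 σ, f ∈ F →
      ∃ g : Lp ℂ 2 σ, g ∈ F ⊔ oneSpan σ ∧ (g : ℂ → ℂ) =ᵐ[σ] fun ξ => ξ * f ξ)
    (T : F →ₗ[ℂ] F)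
    (hT : ∀ x : F, ∃ c : ℂ,
      ((T x : Lp ℂ 2 σ) : ℂ → ℂ) =ᵐ[σ] fun ξ => ξ * ((x : Lp ℂ 2 σ) : ℂ → ℂ) ξ - c)
    (p : ℕ) (hp1 : 1 ≤ p)
    (hstab : LinearMap.ker ((T - l • (LinearMap.id : F →ₗ[ℂ] F)) ^ p) =
      LinearMap.ker ((T - l • (LinearMap.id : F →ₗ[ℂ] F)) ^ (p + 1)))
    (hproper : LinearMap.ker ((T - l • (LinearMap.id : F →ₗ[ℂ] F)) ^ (p - 1)) ≠
      LinearMap.ker ((T - l • (LinearMap.id : F →ₗ[ℂ] F)) ^ p)) :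
    Submodule.map F.subtype
        (LinearMap.ker ((T - l • (LinearMap.id : F →ₗ[ℂ] F)) ^ p)) = Qspace σ l p := by
  classical
  set A : Module.End ℂ F := T - l • (LinearMap.id : F →ₗ[ℂ] F) with hA
  -- almost everywhere, ξ ≠ l
  have hne : ∀ᵐ ξ ∂σ, ξ ≠ l := by
    rw [ae_iff]
    have : {a : ℂ | ¬ a ≠ l} = {l} := by ext a; simp
    rw [this]; exact hl
  -- monotonicity of kernels of powers
  have kmono : ∀ i j : ℕ, i ≤ j → LinearMap.ker (A ^ i) ≤ LinearMap.ker (A ^ j) := by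
    intro i j hij
    obtain ⟨m, rfl⟩ := Nat.exists_eq_add_of_le hij
    rw [add_comm, pow_add, Module.End.mul_eq_comp]
    exact LinearMap.ker_le_ker_comp _ _
  -- elements of ker (A^k) are a.e. combinations of (ξ-l)⁻¹ ^ (j+1), j < k
  have key : ∀ (k : ℕ) (y : F), y ∈ LinearMap.ker (A ^ k) → ∃ c : ℕ → ℂ,
      ((y : Lp ℂ 2 σ) : ℂ → ℂ) =ᵐ[σ]
        fun ξ => ∑ j ∈ Finset.range k, c j * ((ξ - l)⁻¹) ^ (j + 1) := by
    intro k
    induction k with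
    | zero =>
      intro y hy
      refine ⟨0, ?_⟩
      have hy0 : y = 0 := by simpa [LinearMap.mem_ker] using hy
      subst hy0
      simp; exact Lp.coeFn_zero (E := ℂ) (p := 2) (μ := σ)
    | succ k ih =>
      intro y hy
      have hAy : A y ∈ LinearMap.ker (A ^ k) := by
        rw [LinearMap.mem_ker] at hy ⊢
        rw [← Module.End.mul_apply, ← pow_succ]
        exact hy
      obtain ⟨c, hc⟩ := ih (A y) hAy
      obtain ⟨c0, hc0⟩ := hT y
      have h1 : (↑(A y) : Lp ℂ 2 σ) = (↑(T y) : Lp ℂ 2 σ) - l • (↑y : Lp ℂ 2 σ) := by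
        simp [hA, LinearMap.sub_apply, LinearMap.smul_apply]
      have hAcoe : ((A y : Lp ℂ 2 σ) : ℂ → ℂ) =ᵐ[σ]
          fun ξ => ((T y : Lp ℂ 2 σ) : ℂ → ℂ) ξ - l * ((y : Lp ℂ 2 σ) : ℂ → ℂ) ξ := by
        rw [h1]
        filter_upwards [Lp.coeFn_sub (↑(T y) : Lp ℂ 2 σ) (l • (↑y : Lp ℂ 2 σ)),
          Lp.coeFn_smul l (↑y : Lp ℂ 2 σ)] with ξ h2 h3
        simp only [Pi.sub_apply] at h2
        rw [h2, h3]; simp [smul_eq_mul]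
      refine ⟨fun j => if j = 0 then c0 else c (j - 1), ?_⟩
      filter_upwards [hc, hc0, hAcoe, hne] with ξ hc' hc0' hAcoe' hξ
      have hsub : ξ - l ≠ 0 := sub_ne_zero.mpr hξ
      have key2 : (ξ - l) * ((y : Lp ℂ 2 σ) : ℂ → ℂ) ξ
          = c0 + ∑ j ∈ Finset.range k, c j * ((ξ - l)⁻¹) ^ (j + 1) := by
        rw [← hc', hAcoe', hc0']; ring
      have hy5 : ((y : Lp ℂ 2 σ) : ℂ → ℂ) ξ
          = (ξ - l)⁻¹ * (c0 + ∑ j ∈ Finset.range k, c j * ((ξ - l)⁻¹) ^ (j + 1)) := by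
        rw [← key2, ← mul_assoc, inv_mul_cancel₀ hsub, one_mul]
      rw [hy5, Finset.sum_range_succ']
      simp only [Nat.succ_ne_zero, if_neg, Nat.add_sub_cancel, if_pos rfl, reduceIte]
      rw [mul_add, Finset.mul_sum, add_comm]
      congr 1
      · exact Finset.sum_congr rfl fun j _ => by ring
      · rw [pow_one]; ring
  -- strictness of the kernel chain below p
  have strict : ∀ k, k < p → LinearMap.ker (A ^ k) ≠ LinearMap.ker (A ^ (k + 1)) := by
    intro k hk heq
    apply hproper
    have h1 := Module.End.ker_pow_constant heq (p - 1 - k)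
    have h2 := Module.End.ker_pow_constant heq (p - k)
    have e1 : k + (p - 1 - k) = p - 1 := by omega
    have e2 : k + (p - k) = p := by omega
    rw [e1] at h1; rw [e2] at h2
    rw [← h1, ← h2]
  -- there are genuine representatives of (ξ - l)⁻¹ ^ (j+1) in ker (A^(j+1))
  have exg : ∀ k, k ≤ p → ∃ g : ℕ → Lp ℂ 2 σ, ∀ j < k,
      g j ∈ Submodule.map F.subtype (LinearMap.ker (A ^ (j + 1))) ∧
      ((g j : ℂ → ℂ)) =ᵐ[σ] fun ξ => ((ξ - l)⁻¹) ^ (j + 1) := by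
    intro k
    induction k with
    | zero => exact fun _ => ⟨fun _ => 0, fun j hj => absurd hj (Nat.not_lt_zero j)⟩
    | succ k ih =>
      intro hkp
      obtain ⟨g, hg⟩ := ih (Nat.le_of_succ_le hkp)
      have hlt : LinearMap.ker (A ^ k) < LinearMap.ker (A ^ (k + 1)) :=
        lt_of_le_of_ne (kmono k (k + 1) (Nat.le_succ k)) (strict k hkp)
      obtain ⟨y, hy1, hy2⟩ := SetLike.exists_of_lt hlt
      obtain ⟨c, hc⟩ := key (k + 1) y hy1
      have hgcoe : ⇑(∑ j ∈ Finset.range k, c j • g j) =ᵐ[σ]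
          fun ξ => ∑ j ∈ Finset.range k, c j * ((ξ - l)⁻¹) ^ (j + 1) := by
        have hall : ∀ᵐ ξ ∂σ, ∀ j ∈ Finset.range k,
            (g j : ℂ → ℂ) ξ = ((ξ - l)⁻¹) ^ (j + 1) := by
          rw [Filter.eventually_all_finset]
          exact fun j hj => (hg j (Finset.mem_range.mp hj)).2
        filter_upwards [lp_coeFn_sum_smul σ (Finset.range k) c g, hall] with ξ h1 h2
        rw [h1]
        exact Finset.sum_congr rfl fun j hj => by rw [h2 j hj]
      have hck : c k ≠ 0 := by
        intro h0
        apply hy2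
        have hfk : (fun ξ => ∑ j ∈ Finset.range (k + 1), c j * ((ξ - l)⁻¹) ^ (j + 1))
            = fun ξ => ∑ j ∈ Finset.range k, c j * ((ξ - l)⁻¹) ^ (j + 1) := by
          funext ξ
          rw [Finset.sum_range_succ, h0, zero_mul, add_zero]
        have heq : (↑y : Lp ℂ 2 σ) = ∑ j ∈ Finset.range k, c j • g j := by
          apply Lp.ext
          refine hc.trans ?_
          rw [hfk]
          exact hgcoe.symm
        have hmem : (↑y : Lp ℂ 2 σ) ∈ Submodule.map F.subtype (LinearMap.ker (A ^ k)) := by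
          rw [heq]
          exact Submodule.sum_mem _ fun j hj => Submodule.smul_mem _ _
            (Submodule.map_mono (kmono (j + 1) k (Finset.mem_range.mp hj)) (hg j (Finset.mem_range.mp hj)).1)
        obtain ⟨z, hz, hzy⟩ := hmem
        have hzey : z = y := Subtype.ext hzy
        exact hzey ▸ hz
      -- define the new representative
      set gk : Lp ℂ 2 σ := (c k)⁻¹ • ((↑y : Lp ℂ 2 σ) - ∑ j ∈ Finset.range k, c j • g j) with hgk
      refine ⟨Function.update g k gk, ?_⟩
      intro j hj
      rcases Nat.lt_succ_iff_lt_or_eq.mp hj with hjk | rfl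
      · rw [Function.update_of_ne (Nat.ne_of_lt hjk)]
        exact hg j hjk
      · rw [Function.update_self]
        constructor
        · apply Submodule.smul_mem
          apply Submodule.sub_mem
          · exact ⟨y, hy1, rfl⟩
          · exact Submodule.sum_mem _ fun i hi => Submodule.smul_mem _ _
              (Submodule.map_mono (kmono (i + 1) (j + 1) (Nat.succ_le_succ (Finset.mem_range.mp hi).le)) (hg i (Finset.mem_range.mp hi)).1)
        · have h1 : ⇑gk =ᵐ[σ] fun ξ => (c j)⁻¹ *
              (((↑y : Lp ℂ 2 σ) : ℂ → ℂ) ξ - (∑ i ∈ Finset.range j, c i • g i : Lp ℂ 2 σ) ξ) := by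
            rw [hgk]
            filter_upwards [Lp.coeFn_smul (c j)⁻¹ ((↑y : Lp ℂ 2 σ) - ∑ i ∈ Finset.range j, c i • g i),
              Lp.coeFn_sub (↑y : Lp ℂ 2 σ) (∑ i ∈ Finset.range j, c i • g i)] with ξ ha hb
            rw [ha]
            simp only [Pi.smul_apply, smul_eq_mul]
            rw [hb]
            simp
          refine h1.trans ?_
          filter_upwards [hc, hgcoe] with ξ ha hb
          rw [ha, hb, Finset.sum_range_succ]
          field_simp
          ring
  -- final assembly
  obtain ⟨g, hg⟩ := exg p le_rfl
  apply le_antisymm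
  · rintro x ⟨y, hy, rfl⟩
    obtain ⟨c, hc⟩ := key p y hy
    have hgcoe : ⇑(∑ j ∈ Finset.range p, c j • g j) =ᵐ[σ]
        fun ξ => ∑ j ∈ Finset.range p, c j * ((ξ - l)⁻¹) ^ (j + 1) := by
      have hall : ∀ᵐ ξ ∂σ, ∀ j ∈ Finset.range p,
          (g j : ℂ → ℂ) ξ = ((ξ - l)⁻¹) ^ (j + 1) := by
        rw [Filter.eventually_all_finset]
        exact fun j hj => (hg j (Finset.mem_range.mp hj)).2
      filter_upwards [lp_coeFn_sum_smul σ (Finset.range p) c g, hall] with ξ h1 h2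
      rw [h1]
      exact Finset.sum_congr rfl fun j hj => by rw [h2 j hj]
    have heq : F.subtype y = ∑ j ∈ Finset.range p, c j • g j :=
      Lp.ext (hc.trans hgcoe.symm)
    rw [heq]
    exact Submodule.sum_mem _ fun j hj => Submodule.smul_mem _ _
      (Submodule.subset_span ⟨j + 1, Nat.succ_le_succ (Nat.zero_le j),
        Finset.mem_range.mp hj, (hg j (Finset.mem_range.mp hj)).2⟩)
  · rw [Qspace, Submodule.span_le]
    rintro x ⟨j, hj1, hjp, hx⟩
    have hjlt : j - 1 < p := by omega
    have hxg : x = g (j - 1) := by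
      apply Lp.ext
      rw [show j = j - 1 + 1 by omega] at hx
      exact hx.trans ((hg (j - 1) hjlt).2).symm
    rw [SetLike.mem_coe, hxg]
    exact Submodule.map_mono (kmono (j - 1 + 1) p (by omega)) (hg (j - 1) hjlt).1
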